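/- Let p₁ = [0:1], p₂ = [1:1], p₃ = [2:1], p₄ = [3:1], p₅ = [6:1] in ℙ¹(ℚ). Suppose g₁, g₂, g₃ ∈ PGL₂(ℚ) satisfy: g₁ exchanges p₁ with p₂ and exchanges p₃ with p₄ (i.e., g₁(p₁) = p₂, g₁(p₂) = p₁, g₁(p₃) = p₄, g₁(p₄) = p₃); g₂ exchanges p₁ with p₃ and exchanges p₄ with p₅; and g₃ exchanges p₁ with p₃ and exchanges p₂ with p₅. Then the composition g₁ ∘ g₂ ∘ g₃ equals σ, the class in PGL₂(ℚ) of the matrix with rows (1,1) and (0,1), i.e., the Möbius transformation z ↦ z + 1. -/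

import Mathlib

open Matrix

noncomputable section

/-- The projective line `ℙ¹(K)` over a field `K`, as the projectivization of `K²`. -/
abbrev P1 (K : Type*) [Field K] : Type _ := Projectivization K (Fin 2 → K)

/-- `PGL₂(K)`: the quotient of `GL₂(K)` by its center. -/
abbrev PGL2 (K : Type*) [Field K] : Type _ :=
  GL (Fin 2) K ⧸ Subgroup.center (GL (Fin 2) K)

namespace PGL2

variable {K : Type*} [Field K]

/-- The linear automorphism of `K²` attached to an element of `GL₂(K)`. -/
def glEquiv (g : GL (Fin 2) K) : (Fin 2 → K) ≃ₗ[K] (Fin 2 → K) :=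
  (Matrix.GeneralLinearGroup.toLin g).toLinearEquiv

lemma glEquiv_apply (g : GL (Fin 2) K) (v : Fin 2 → K) :
    glEquiv g v = (g : Matrix (Fin 2) (Fin 2) K).mulVec v := rfl

/-- `GL₂(K)` acts on `ℙ¹(K)` by Möbius transformations. -/
instance : SMul (GL (Fin 2) K) (P1 K) :=
  ⟨fun g => Projectivization.map (glEquiv g).toLinearMap (glEquiv g).injective⟩

lemma gl_smul_mk (g : GL (Fin 2) K) (v : Fin 2 → K) (hv : v ≠ 0) :
    g • Projectivization.mk K v hv
      = Projectivization.mk K ((g : Matrix (Fin 2) (Fin 2) K).mulVec v)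
          (by intro h; exact hv ((glEquiv g).injective (by rw [map_zero]; exact h))) :=
  Projectivization.map_mk (glEquiv g).toLinearMap (glEquiv g).injective v hv

instance : MulAction (GL (Fin 2) K) (P1 K) where
  one_smul x := by
    induction x using Projectivization.ind with
    | h v hv => rw [gl_smul_mk]; simp
  mul_smul g h x := by
    induction x using Projectivization.ind with
    | h v hv => rw [gl_smul_mk, gl_smul_mk, gl_smul_mk]; simp only [Units.val_mul, Matrix.mulVec_mulVec]

lemma exists_scalar_of_mem_center (g : GL (Fin 2) K)
    (hg : g ∈ Subgroup.center (GL (Fin 2) K)) :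
    ∃ a : K, (g : Matrix (Fin 2) (Fin 2) K) = a • (1 : Matrix (Fin 2) (Fin 2) K) := by
  have hmem := Subgroup.mem_center_iff.mp hg
  set A : Matrix (Fin 2) (Fin 2) K := (g : Matrix (Fin 2) (Fin 2) K) with hA
  have hUdet : ((!![1, 1; 0, 1] : Matrix (Fin 2) (Fin 2) K)).det ≠ 0 := by
    norm_num [Matrix.det_fin_two_of]
  have hLdet : ((!![1, 0; 1, 1] : Matrix (Fin 2) (Fin 2) K)).det ≠ 0 := by
    norm_num [Matrix.det_fin_two_of]
  have hU := congrArg Units.val (hmem (Matrix.GeneralLinearGroup.mkOfDetNeZero _ hUdet))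
  have hL := congrArg Units.val (hmem (Matrix.GeneralLinearGroup.mkOfDetNeZero _ hLdet))
  have hU' : (!![1, 1; 0, 1] : Matrix (Fin 2) (Fin 2) K) * A = A * !![1, 1; 0, 1] := hU
  have hL' : (!![1, 0; 1, 1] : Matrix (Fin 2) (Fin 2) K) * A = A * !![1, 0; 1, 1] := hL
  have e1 := congrFun (congrFun hU' 0) 0
  have e2 := congrFun (congrFun hU' 0) 1
  have e3 := congrFun (congrFun hL' 0) 0
  simp [Matrix.mul_apply, Fin.sum_univ_two] at e1 e2 e3
  refine ⟨A 0 0, ?_⟩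
  ext i j
  fin_cases i <;> fin_cases j <;>
    simp [Matrix.one_apply] <;> first | exact e3 | exact e1 | linear_combination e2



lemma center_smul_eq (g : GL (Fin 2) K) (hg : g ∈ Subgroup.center (GL (Fin 2) K))
    (x : P1 K) : g • x = x := by
  obtain ⟨a, hA⟩ := exists_scalar_of_mem_center g hg
  have ha : a ≠ 0 := by
    intro h
    subst h
    have : IsUnit (g : Matrix (Fin 2) (Fin 2) K).det := ⟨Matrix.GeneralLinearGroup.det g, rfl⟩
    rw [hA] at this
    simp at this
  induction x using Projectivization.ind with
  | h v hv =>
    rw [gl_smul_mk]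
    rw [Projectivization.mk_eq_mk_iff]
    exact ⟨Units.mk0 a ha, by ext i; fin_cases i <;> simp [hA, Matrix.mulVec, dotProduct, Fin.sum_univ_two, Matrix.one_apply]⟩

/-- `PGL₂(K)` acts on `ℙ¹(K)` by Möbius transformations. -/
def toPerm : PGL2 K →* Equiv.Perm (P1 K) :=
  QuotientGroup.lift _ (MulAction.toPermHom (GL (Fin 2) K) (P1 K))
    (fun g hg => Equiv.ext fun x => center_smul_eq g hg x)

instance : SMul (PGL2 K) (P1 K) := ⟨fun g x => toPerm g x⟩

lemma smul_def (g : PGL2 K) (x : P1 K) : g • x = toPerm g x := rfl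

instance : MulAction (PGL2 K) (P1 K) where
  one_smul x := by simp [smul_def]
  mul_smul g h x := by simp [smul_def]

/-- The class in `PGL₂(K)` of a matrix with nonzero determinant. -/
def cls (M : Matrix (Fin 2) (Fin 2) K) (h : M.det ≠ 0) : PGL2 K :=
  QuotientGroup.mk (Matrix.GeneralLinearGroup.mkOfDetNeZero M h)

lemma cls_smul_mk (M : Matrix (Fin 2) (Fin 2) K) (h : M.det ≠ 0) (v : Fin 2 → K)
    (hv : v ≠ 0) (hMv : M.mulVec v ≠ 0) :
    cls M h • Projectivization.mk K v hv = Projectivization.mk K (M.mulVec v) hMv := by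
  rw [smul_def, cls]
  show (Matrix.GeneralLinearGroup.mkOfDetNeZero M h) • Projectivization.mk K v hv = _
  rw [gl_smul_mk]
  rfl

lemma vec_ne_zero (a : K) : ![a, (1 : K)] ≠ 0 := fun h => by simpa using congrFun h 1

/-- The affine point `[z : 1]` of `ℙ¹(K)`. -/
def affPt (z : K) : P1 K := Projectivization.mk K ![z, 1] (vec_ne_zero z)

/-- The point `[a : b]` of `ℙ¹(K)`. -/
def pt (a b : K) (h : ![a, b] ≠ 0) : P1 K := Projectivization.mk K ![a, b] h

end PGL2


namespace PGL2

lemma mk_smul_eq (G : GL (Fin 2) ℚ) (x : P1 ℚ) :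
    (QuotientGroup.mk G : PGL2 ℚ) • x = G • x := rfl

lemma fix_three (h : PGL2 ℚ)
    (h1 : h • affPt (1:ℚ) = affPt 1) (h2 : h • affPt (2:ℚ) = affPt 2)
    (h3 : h • affPt (3:ℚ) = affPt 3) : h = 1 := by
  obtain ⟨G, rfl⟩ := QuotientGroup.mk_surjective h
  set A := (G : Matrix (Fin 2) (Fin 2) ℚ) with hA
  have key : ∀ z : ℚ, (QuotientGroup.mk G : PGL2 ℚ) • affPt z = affPt z →
      ∃ a : ℚ, a • ![z, (1:ℚ)] = A.mulVec ![z, 1] := by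
    intro z hz
    have hz' : (G • affPt z : P1 ℚ) = affPt z := hz
    rw [affPt, gl_smul_mk, Projectivization.mk_eq_mk_iff'] at hz'
    exact hz'
  obtain ⟨a₁, ha₁⟩ := key 1 h1
  obtain ⟨a₂, ha₂⟩ := key 2 h2
  obtain ⟨a₃, ha₃⟩ := key 3 h3
  have e10 := congrFun ha₁ 0
  have e11 := congrFun ha₁ 1
  have e20 := congrFun ha₂ 0
  have e21 := congrFun ha₂ 1
  have e30 := congrFun ha₃ 0
  have e31 := congrFun ha₃ 1
  simp [Matrix.mulVec, dotProduct, Fin.sum_univ_two] at e10 e11 e20 e21 e30 e31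
  have hd : A 1 0 = 0 := by linarith
  have hc : A 0 1 = 0 := by linarith
  have hbe : A 0 0 = A 1 1 := by linarith
  have hAs : A = A 0 0 • (1 : Matrix (Fin 2) (Fin 2) ℚ) := by
    ext i j
    fin_cases i <;> fin_cases j <;> simp [Matrix.one_apply, hd, hc, hbe]
  rw [QuotientGroup.eq_one_iff]
  rw [Subgroup.mem_center_iff]
  intro g
  ext1
  show (g : Matrix (Fin 2) (Fin 2) ℚ) * A = A * g
  rw [hAs, Matrix.mul_smul, Matrix.smul_mul, Matrix.mul_one, Matrix.one_mul]

lemma sigma_smul (h : (!![(1:ℚ),1;0,1]).det ≠ 0) (z : ℚ) :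
    cls !![(1:ℚ),1;0,1] h • affPt z = affPt (z+1) := by
  have hv : (!![(1:ℚ),1;0,1]).mulVec ![z,1] = ![z+1,1] := by
    funext i
    fin_cases i <;> simp [Matrix.mulVec, dotProduct, Fin.sum_univ_two]
  rw [affPt, cls_smul_mk _ h _ _ (by rw [hv]; exact vec_ne_zero _)]
  simp only [hv]
  rfl

end PGL2


open PGL2 in
/-- With `p₁ = 0`, `p₂ = 1`, `p₃ = 2`, `p₄ = 3`, `p₅ = 6` on `ℙ¹(ℚ)`, if `g₁` exchanges
`p₁ ↔ p₂` and `p₃ ↔ p₄`, `g₂` exchanges `p₁ ↔ p₃` and `p₄ ↔ p₅`, and `g₃` exchanges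
`p₁ ↔ p₃` and `p₂ ↔ p₅`, then `g₁ g₂ g₃` is the Möbius transformation `z ↦ z + 1`. -/
theorem composition_of_involutions_eq_sigma (g₁ g₂ g₃ : PGL2 ℚ)
    (h₁a : g₁ • affPt (0 : ℚ) = affPt 1) (h₁b : g₁ • affPt (1 : ℚ) = affPt 0)
    (h₁c : g₁ • affPt (2 : ℚ) = affPt 3) (h₁d : g₁ • affPt (3 : ℚ) = affPt 2)
    (h₂a : g₂ • affPt (0 : ℚ) = affPt 2) (h₂b : g₂ • affPt (2 : ℚ) = affPt 0)
    (h₂c : g₂ • affPt (3 : ℚ) = affPt 6) (h₂d : g₂ • affPt (6 : ℚ) = affPt 3)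
    (h₃a : g₃ • affPt (0 : ℚ) = affPt 2) (h₃b : g₃ • affPt (2 : ℚ) = affPt 0)
    (h₃c : g₃ • affPt (1 : ℚ) = affPt 6) (h₃d : g₃ • affPt (6 : ℚ) = affPt 1) :
    g₁ * g₂ * g₃ = cls !![(1 : ℚ), 1; 0, 1] (by norm_num [Matrix.det_fin_two_of]) := by
  set sg := cls !![(1 : ℚ), 1; 0, 1] (by norm_num [Matrix.det_fin_two_of]) with hsg
  have hσ : ∀ z : ℚ, sg • affPt z = affPt (z+1) := fun z => sigma_smul _ z
  have hσ' : ∀ z : ℚ, sg⁻¹ • affPt (z+1) = affPt z := by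
    intro z; rw [← hσ z, inv_smul_smul]
  have e1 : (g₁ * g₂ * g₃) • affPt (0:ℚ) = affPt 1 := by
    rw [mul_smul, mul_smul, h₃a, h₂b, h₁a]
  have e2 : (g₁ * g₂ * g₃) • affPt (1:ℚ) = affPt 2 := by
    rw [mul_smul, mul_smul, h₃c, h₂d, h₁d]
  have e3 : (g₁ * g₂ * g₃) • affPt (2:ℚ) = affPt 3 := by
    rw [mul_smul, mul_smul, h₃b, h₂a, h₁c]
  have key : (g₁ * g₂ * g₃) * sg⁻¹ = 1 := by
    apply fix_three
    · rw [mul_smul]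
      have := hσ' 0; norm_num at this; rw [this]; norm_num at e1 ⊢; exact e1
    · rw [mul_smul]
      have := hσ' 1; norm_num at this; rw [this]; norm_num at e2 ⊢; exact e2
    · rw [mul_smul]
      have := hσ' 2; norm_num at this; rw [this]; norm_num at e3 ⊢; exact e3
  exact mul_inv_eq_one.mp key
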